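/- Let k = p^a q^b l with gcd(l, pq) = 1, 0 ≤ a ≤ m−1, 0 ≤ b ≤ n−1, and set ζ_p = β^{p^{m−1} q^{n+b}} (a primitive p-th root of unity). Then for all 1 ≤ i ≤ m: S_0^{(i,0)}(β^k) = p^{i−1}(p−1)/2 (as an element of F_{4^{d*}}) if i ≤ a; S_0^{(i,0)}(β^k) = Σ_{t ∈ D_0^{(p)}} ζ_p^{lt} if i = a+1; and S_0^{(i,0)}(β^k) = 0 if i > a+1. -/

import Mathlib

open Finset Polynomial

noncomputable section

/-- The field `F₄` with four elements. -/
abbrev F4 : Type := GaloisField 2 2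

/-- Generic generalized cyclotomic class of index `0` modulo `M`:
`{ g^(2t) * y^k mod M : 0 ≤ t < dHalf, 0 ≤ k < e }`. -/
def GC0 (g y M dHalf e : ℕ) : Finset ℕ :=
  ((Finset.range dHalf) ×ˢ (Finset.range e)).image
    (fun tk => g ^ (2 * tk.1) * y ^ tk.2 % M)

/-- Generic generalized cyclotomic class of index `1` modulo `M`: `g · GC0 (mod M)`. -/
def GC1 (g y M dHalf e : ℕ) : Finset ℕ :=
  (GC0 g y M dHalf e).image (fun x => g * x % M)

/-- Class of index `h ∈ {0,1}`. -/
def GC (h g y M dHalf e : ℕ) : Finset ℕ :=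
  if h = 0 then GC0 g y M dHalf e else GC1 g y M dHalf e

/-- `e_{i,j} = gcd(p^{i-1}(p-1), q^{j-1}(q-1))`. -/
def eij (p q i j : ℕ) : ℕ := Nat.gcd (p ^ (i - 1) * (p - 1)) (q ^ (j - 1) * (q - 1))

/-- `d_{i,j} = p^{i-1}(p-1) q^{j-1}(q-1) / e_{i,j}`. -/
def dij (p q i j : ℕ) : ℕ := p ^ (i - 1) * (p - 1) * (q ^ (j - 1) * (q - 1)) / eij p q i j

/-- `D_h^{(p^i q^j)}`. -/
def DPQ (p q g y h i j : ℕ) : Finset ℕ :=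
  GC h g y (p ^ i * q ^ j) (dij p q i j / 2) (eij p q i j)

/-- `D_h^{(2 p^i q^j)}`. -/
def D2PQ (p q g y h i j : ℕ) : Finset ℕ :=
  GC h g y (2 * (p ^ i * q ^ j)) (dij p q i j / 2) (eij p q i j)

/-- `D_h^{(p^i)}`. -/
def DP (p g h i : ℕ) : Finset ℕ := GC h g 1 (p ^ i) (p ^ (i - 1) * (p - 1) / 2) 1

/-- `D_h^{(2p^i)}`. -/
def D2P (p g h i : ℕ) : Finset ℕ := GC h g 1 (2 * p ^ i) (p ^ (i - 1) * (p - 1) / 2) 1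

/-- `D_h^{(q^j)}`. -/
def DQ (q g h j : ℕ) : Finset ℕ := GC h g 1 (q ^ j) (q ^ (j - 1) * (q - 1) / 2) 1

/-- `D_h^{(2q^j)}`. -/
def D2Q (q g h j : ℕ) : Finset ℕ := GC h g 1 (2 * q ^ j) (q ^ (j - 1) * (q - 1) / 2) 1

/-- `c · A`. -/
def scaled (c : ℕ) (A : Finset ℕ) : Finset ℕ := A.image (fun x => c * x)

/-- `H_h^{(p^i q^j)} = p^{m-i} q^{n-j} D_h^{(p^i q^j)}`. -/
def HPQ (p q m n g y h i j : ℕ) : Finset ℕ :=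
  scaled (p ^ (m - i) * q ^ (n - j)) (DPQ p q g y h i j)

/-- `H_h^{(2 p^i q^j)} = p^{m-i} q^{n-j} D_h^{(2 p^i q^j)}`. -/
def H2PQ (p q m n g y h i j : ℕ) : Finset ℕ :=
  scaled (p ^ (m - i) * q ^ (n - j)) (D2PQ p q g y h i j)

/-- `H_h^{(p^i)} = p^{m-i} q^n D_h^{(p^i)}`. -/
def HP (p q m n g h i : ℕ) : Finset ℕ := scaled (p ^ (m - i) * q ^ n) (DP p g h i)

/-- `H_h^{(2p^i)} = p^{m-i} q^n D_h^{(2p^i)}`. -/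
def H2P (p q m n g h i : ℕ) : Finset ℕ := scaled (p ^ (m - i) * q ^ n) (D2P p g h i)

/-- `H_h^{(q^j)} = p^m q^{n-j} D_h^{(q^j)}`. -/
def HQ (p q m n g h j : ℕ) : Finset ℕ := scaled (p ^ m * q ^ (n - j)) (DQ q g h j)

/-- `H_h^{(2q^j)} = p^m q^{n-j} D_h^{(2q^j)}`. -/
def H2Q (p q m n g h j : ℕ) : Finset ℕ := scaled (p ^ m * q ^ (n - j)) (D2Q q g h j)

/-- `⋃_{i,j} H_h^{(2p^i q^j)} ∪ ⋃_i H_h^{(2p^i)} ∪ ⋃_j H_h^{(2q^j)}`. -/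
def UnionH (p q m n g y h : ℕ) : Finset ℕ :=
  ((Finset.Icc 1 m).biUnion fun i => (Finset.Icc 1 n).biUnion fun j => H2PQ p q m n g y h i j)
    ∪ ((Finset.Icc 1 m).biUnion fun i => H2P p q m n g h i)
    ∪ ((Finset.Icc 1 n).biUnion fun j => H2Q p q m n g h j)

/-- `⋃_{i,j} 2H_h^{(p^i q^j)} ∪ ⋃_i 2H_h^{(p^i)} ∪ ⋃_j 2H_h^{(q^j)}`. -/
def Union2H (p q m n g y h : ℕ) : Finset ℕ :=
  ((Finset.Icc 1 m).biUnion fun i =>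
      (Finset.Icc 1 n).biUnion fun j => scaled 2 (HPQ p q m n g y h i j))
    ∪ ((Finset.Icc 1 m).biUnion fun i => scaled 2 (HP p q m n g h i))
    ∪ ((Finset.Icc 1 n).biUnion fun j => scaled 2 (HQ p q m n g h j))

/-- The quaternary generalized cyclotomic sequence of period `2 p^m q^n`. -/
def seqS (p q m n g y : ℕ) (a b c d e : F4) (u : ℕ) : F4 :=
  let v := u % (2 * (p ^ m * q ^ n))
  if v = 0 then 0
  else if v = p ^ m * q ^ n then e
  else if v ∈ UnionH p q m n g y 0 then a
  else if v ∈ UnionH p q m n g y 1 then b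
  else if v ∈ Union2H p q m n g y 0 then c
  else if v ∈ Union2H p q m n g y 1 then d
  else 0

/-- The generating polynomial `S(x) = ∑_{u=0}^{2p^m q^n - 1} s_u x^u ∈ F₄[x]`. -/
def genPoly (p q m n g y : ℕ) (a b c d e : F4) : Polynomial F4 :=
  ∑ u ∈ Finset.range (2 * (p ^ m * q ^ n)),
    Polynomial.C (seqS p q m n g y a b c d e u) * Polynomial.X ^ u

/-- The linear complexity of a sequence over a field: the least `L > 0` admitting a linear
recurrence `s_{u+L} = c_1 s_{u+L-1} + ⋯ + c_L s_u`. -/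
def LinearComplexity {F : Type*} [Field F] (s : ℕ → F) : ℕ :=
  sInf {L | 0 < L ∧ ∃ c : Fin L → F,
    ∀ u, s (u + L) = ∑ i : Fin L, c i * s (u + L - 1 - (i : ℕ))}


section finsetlemmas

lemma D2P_eq (p g i : ℕ) :
    D2P p g 0 i = (Finset.range (p ^ (i - 1) * (p - 1) / 2)).image
      (fun t => g ^ (2 * t) % (2 * p ^ i)) := by
  ext x
  simp only [D2P, GC, if_true, reduceIte, GC0, Finset.mem_image, Finset.mem_product,
    Finset.mem_range, Nat.lt_one_iff]
  constructor
  · rintro ⟨⟨t, k⟩, ⟨ht, rfl⟩, rfl⟩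
    exact ⟨t, ht, by simp⟩
  · rintro ⟨t, ht, rfl⟩
    exact ⟨⟨t, 0⟩, ⟨ht, rfl⟩, by simp⟩

lemma DP_eq (p g : ℕ) :
    DP p g 0 1 = (Finset.range ((p - 1) / 2)).image (fun t => g ^ (2 * t) % p) := by
  ext x
  simp only [DP, GC, if_true, reduceIte, GC0, Finset.mem_image, Finset.mem_product,
    Finset.mem_range, Nat.lt_one_iff, pow_one, Nat.sub_self, pow_zero, one_mul]
  constructor
  · rintro ⟨⟨t, k⟩, ⟨ht, rfl⟩, rfl⟩
    exact ⟨t, ht, by simp⟩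
  · rintro ⟨t, ht, rfl⟩
    exact ⟨⟨t, 0⟩, ⟨ht, rfl⟩, by simp⟩

lemma sum_H2P {K : Type*} [Field K] (p q m n g i : ℕ) (z : K) (hc : 0 < p ^ (m - i) * q ^ n)
    (hinj : ∀ a < p ^ (i - 1) * (p - 1) / 2, ∀ b < p ^ (i - 1) * (p - 1) / 2,
      g ^ (2 * a) % (2 * p ^ i) = g ^ (2 * b) % (2 * p ^ i) → a = b) :
    ∑ t ∈ H2P p q m n g 0 i, z ^ t
      = ∑ t ∈ Finset.range (p ^ (i - 1) * (p - 1) / 2),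
          z ^ (p ^ (m - i) * q ^ n * (g ^ (2 * t) % (2 * p ^ i))) := by
  rw [H2P, scaled, D2P_eq, Finset.image_image,
    show ((fun x => p ^ (m - i) * q ^ n * x) ∘ fun t => g ^ (2 * t) % (2 * p ^ i))
      = (fun t => p ^ (m - i) * q ^ n * (g ^ (2 * t) % (2 * p ^ i))) from rfl,
    Finset.sum_image (fun a ha b hb hab => hinj a (Finset.mem_range.mp ha) b
      (Finset.mem_range.mp hb) (Nat.eq_of_mul_eq_mul_left hc hab))]

lemma sum_DP {K : Type*} [Field K] (p g : ℕ) (z : K) (l : ℕ)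
    (hinj : ∀ a < (p - 1) / 2, ∀ b < (p - 1) / 2,
      g ^ (2 * a) % p = g ^ (2 * b) % p → a = b) :
    ∑ t ∈ DP p g 0 1, z ^ (l * t)
      = ∑ t ∈ Finset.range ((p - 1) / 2), z ^ (l * (g ^ (2 * t) % p)) := by
  rw [DP_eq, Finset.sum_image (fun a ha b hb hab => hinj a (Finset.mem_range.mp ha) b
    (Finset.mem_range.mp hb) hab)]

end finsetlemmas
section helpers

lemma sum_range_mul'' {M : Type*} [AddCommMonoid M] (f : ℕ → M) (s P : ℕ) :
    ∑ t ∈ Finset.range (s * P), f t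
      = ∑ b ∈ Finset.range s, ∑ a ∈ Finset.range P, f (b * P + a) := by
  induction s with
  | zero => simp
  | succ s ih =>
    rw [Nat.succ_mul, Finset.sum_range_add, ih, Finset.sum_range_succ]

lemma sum_range_mul_of_periodic {M : Type*} [AddCommMonoid M] (f : ℕ → M) (s P : ℕ)
    (hper : ∀ t, f (t + P) = f t) :
    ∑ t ∈ Finset.range (s * P), f t = s • ∑ a ∈ Finset.range P, f a := by
  rw [sum_range_mul'']
  have hb : ∀ b a, f (b * P + a) = f a := by
    intro b
    induction b with
    | zero => simp
    | succ b ih =>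
      intro a
      have h : (b + 1) * P + a = (b * P + a) + P := by ring
      rw [h, hper, ih]
  simp only [hb]
  rw [Finset.sum_const, Finset.card_range]

lemma odd_smul_eq {K : Type*} [Field K] (h2 : (2 : K) = 0) {s : ℕ} (hs : Odd s) (x : K) :
    s • x = x := by
  obtain ⟨k, rfl⟩ := hs
  have h : ((2 * k + 1 : ℕ) : K) = 1 := by push_cast; rw [h2]; ring
  rw [nsmul_eq_mul, h, one_mul]

lemma pow_mod_eq' {K : Type*} [Field K] {β : K} {N : ℕ} (hβ1 : β ^ N = 1) (a : ℕ) :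
    β ^ a = β ^ (a % N) := by
  conv_lhs => rw [← Nat.div_add_mod a N, pow_add, pow_mul, hβ1, one_pow, one_mul]

lemma pow_eq_pow_of_modEq_one {K : Type*} [Field K] {β : K} {N : ℕ} (hβ1 : β ^ N = 1) {a b : ℕ}
    (h : a ≡ b [MOD N]) : β ^ a = β ^ b := by
  rw [pow_mod_eq' hβ1 a, pow_mod_eq' hβ1 b, h]

lemma inj_pow_mod {g M D : ℕ} (hord : orderOf ((g : ℕ) : ZMod M) = 2 * D) :
    ∀ a < D, ∀ b < D, g ^ (2 * a) % M = g ^ (2 * b) % M → a = b := by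
  intro a ha b hb hab
  have hz : ((g : ZMod M)) ^ (2 * a) = (g : ZMod M) ^ (2 * b) := by
    have h := (ZMod.natCast_eq_natCast_iff' (g ^ (2 * a)) (g ^ (2 * b)) M).mpr hab
    push_cast at h
    exact h
  have h2 := pow_injOn_Iio_orderOf (x := ((g : ℕ) : ZMod M))
    (by rw [hord]; exact Set.mem_Iio.mpr (by omega))
    (by rw [hord]; exact Set.mem_Iio.mpr (by omega)) hz
  omega

lemma two_eq_zero_of_card {K : Type*} [Field K] [Fintype K] {d : ℕ}
    (hK : Fintype.card K = 4 ^ d) : (2 : K) = 0 := by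
  haveI := ringChar.charP K
  obtain ⟨nn, hprime, hcard⟩ := FiniteField.card K (ringChar K)
  have h4 : (ringChar K) ^ (nn : ℕ) = 2 ^ (2 * d) := by
    rw [← hcard, hK, show (4 : ℕ) = 2 ^ 2 from rfl, ← pow_mul]
  have hdvd : ringChar K ∣ 2 ^ (2 * d) := h4 ▸ dvd_pow_self _ nn.2.ne'
  have h2 : ringChar K = 2 :=
    (Nat.prime_dvd_prime_iff_eq hprime Nat.prime_two).mp (hprime.dvd_of_dvd_pow hdvd)
  calc (2 : K) = ((2 : ℕ) : K) := by norm_num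
    _ = ((ringChar K : ℕ) : K) := by rw [h2]
    _ = 0 := CharP.cast_eq_zero K (ringChar K)

end helpers
theorem statement6
    (p q m n g y : ℕ)
    (hp : p.Prime) (hq : q.Prime) (hpq : p ≠ q) (hpodd : Odd p) (hqodd : Odd q)
    (hm : 1 ≤ m) (hn : 1 ≤ n) (hgodd : Odd g)
    (hgp : ∀ i, 1 ≤ i → i ≤ m → orderOf (g : ZMod (p ^ i)) = Nat.totient (p ^ i))
    (hg2p : ∀ i, 1 ≤ i → i ≤ m → orderOf (g : ZMod (2 * p ^ i)) = Nat.totient (2 * p ^ i))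
    (hgq : ∀ j, 1 ≤ j → j ≤ n → orderOf (g : ZMod (q ^ j)) = Nat.totient (q ^ j))
    (hg2q : ∀ j, 1 ≤ j → j ≤ n → orderOf (g : ZMod (2 * q ^ j)) = Nat.totient (2 * q ^ j))
    (hylt : y < 2 * (p ^ m * q ^ n))
    (hyg : y ≡ g [MOD 2 * p ^ m]) (hy1 : y ≡ 1 [MOD 2 * q ^ n])
    (K : Type*) [Field K] [Fintype K]
    (hK : Fintype.card K = 4 ^ orderOf (4 : ZMod (p ^ m * q ^ n)))
    (β : K) (hβ : IsPrimitiveRoot β (p ^ m * q ^ n))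
    (A B l : ℕ) (hA : A ≤ m - 1) (hB : B ≤ n - 1) (hl : Nat.gcd l (p * q) = 1)
    : ∀ i, 1 ≤ i → i ≤ m →
      ((i ≤ A →
          ∑ t ∈ H2P p q m n g 0 i, (β ^ (p ^ A * q ^ B * l)) ^ t
            = ((p ^ (i - 1) * (p - 1) / 2 : ℕ) : K)) ∧
        (i = A + 1 →
          ∑ t ∈ H2P p q m n g 0 i, (β ^ (p ^ A * q ^ B * l)) ^ t
            = ∑ t ∈ DP p g 0 1, (β ^ (p ^ (m - 1) * q ^ (n + B))) ^ (l * t)) ∧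
        (A + 1 < i →
          ∑ t ∈ H2P p q m n g 0 i, (β ^ (p ^ A * q ^ B * l)) ^ t = 0)) := by
  intro i hi1 him
  have hppos : 0 < p := hp.pos
  have hp1 : 1 < p := hp.one_lt
  have hq1 : 1 < q := hq.one_lt
  have hqpos : 0 < q := hq.pos
  have hp2 : p ≠ 2 := by rintro rfl; obtain ⟨k, hk⟩ := hpodd; omega
  have h2dvd : 2 ∣ p - 1 := by obtain ⟨k, hk⟩ := hpodd; omega
  have hNone : β ^ (p ^ m * q ^ n) = 1 := hβ.pow_eq_one
  have h2K : (2 : K) = 0 := two_eq_zero_of_card hK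
  have hordp : orderOf ((g : ℕ) : ZMod p) = p - 1 := by
    have h := hgp 1 le_rfl hm
    rw [pow_one, Nat.totient_prime hp] at h
    exact h
  have hpg : ¬ p ∣ g := by
    intro hdvd
    have h0 : ((g : ℕ) : ZMod p) = 0 := (ZMod.natCast_eq_zero_iff g p).mpr hdvd
    haveI : Fact (1 < p) := ⟨hp.one_lt⟩
    have h1 : ((g : ℕ) : ZMod p) ^ (p - 1) = 1 := hordp ▸ pow_orderOf_eq_one _
    rw [h0, zero_pow (by omega : p - 1 ≠ 0)] at h1
    exact zero_ne_one h1
  have hpl : ¬ p ∣ l := by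
    intro hdvd
    have h := Nat.dvd_gcd hdvd (dvd_mul_right p q)
    rw [hl] at h
    have := Nat.le_of_dvd one_pos h
    omega
  have hDi : 2 * (p ^ (i - 1) * (p - 1) / 2) = p ^ (i - 1) * (p - 1) :=
    Nat.mul_div_cancel' (h2dvd.mul_left _)
  have htot : Nat.totient (2 * p ^ i) = p ^ (i - 1) * (p - 1) := by
    rw [Nat.totient_mul (Nat.Coprime.pow_right i
        ((Nat.coprime_primes Nat.prime_two hp).mpr (Ne.symm hp2))),
      Nat.totient_two, one_mul, Nat.totient_prime_pow hp (by omega)]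
  have hord2p : orderOf ((g : ℕ) : ZMod (2 * p ^ i)) = 2 * (p ^ (i - 1) * (p - 1) / 2) := by
    rw [hg2p i hi1 him, htot, hDi]
  have hsum := sum_H2P (K := K) p q m n g i (β ^ (p ^ A * q ^ B * l)) (by positivity)
    (inj_pow_mod hord2p)
  have hpm : p ^ (m - i) * p ^ i = p ^ m := by rw [← pow_add]; congr 1; omega
  have hdvdcp : p ^ m * q ^ n ∣ p ^ A * q ^ B * l * (p ^ (m - i) * q ^ n) * p ^ i :=
    ⟨p ^ A * q ^ B * l, by rw [show p ^ A * q ^ B * l * (p ^ (m - i) * q ^ n) * p ^ i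
      = (p ^ (m - i) * p ^ i) * q ^ n * (p ^ A * q ^ B * l) by ring, hpm]⟩
  have hterm : ∀ t : ℕ,
      (β ^ (p ^ A * q ^ B * l)) ^ (p ^ (m - i) * q ^ n * (g ^ (2 * t) % (2 * p ^ i)))
        = β ^ ((p ^ A * q ^ B * l * (p ^ (m - i) * q ^ n) * g ^ (2 * t)) % (p ^ m * q ^ n)) := by
    intro t
    rw [← pow_mul, ← pow_mod_eq' hNone]
    apply pow_eq_pow_of_modEq_one hNone
    have h1 : g ^ (2 * t) % (2 * p ^ i) ≡ g ^ (2 * t) [MOD p ^ i] :=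
      (Nat.mod_modEq _ _).of_dvd (dvd_mul_left _ 2)
    have h3 := (h1.mul_left' (p ^ A * q ^ B * l * (p ^ (m - i) * q ^ n))).of_dvd hdvdcp
    calc p ^ A * q ^ B * l * (p ^ (m - i) * q ^ n * (g ^ (2 * t) % (2 * p ^ i)))
        = p ^ A * q ^ B * l * (p ^ (m - i) * q ^ n) * (g ^ (2 * t) % (2 * p ^ i)) := by ring
      _ ≡ _ [MOD p ^ m * q ^ n] := h3
  have hLHS : ∑ t ∈ H2P p q m n g 0 i, (β ^ (p ^ A * q ^ B * l)) ^ t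
      = ∑ t ∈ Finset.range (p ^ (i - 1) * (p - 1) / 2),
          β ^ ((p ^ A * q ^ B * l * (p ^ (m - i) * q ^ n) * g ^ (2 * t)) % (p ^ m * q ^ n)) := by
    rw [hsum]; exact Finset.sum_congr rfl fun t _ => hterm t
  refine ⟨?_, ?_, ?_⟩
  · -- case i ≤ A
    intro hiA
    rw [hLHS]
    have hdvdK : p ^ m * q ^ n ∣ p ^ A * q ^ B * l * (p ^ (m - i) * q ^ n) := by
      refine ⟨p ^ (A - i) * q ^ B * l, ?_⟩
      rw [show p ^ m * q ^ n * (p ^ (A - i) * q ^ B * l)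
        = (p ^ m * p ^ (A - i)) * (q ^ n * q ^ B * l) by ring, ← pow_add,
        show m + (A - i) = A + (m - i) by omega, pow_add]
      ring
    have hzero : ∀ t : ℕ,
        (p ^ A * q ^ B * l * (p ^ (m - i) * q ^ n) * g ^ (2 * t)) % (p ^ m * q ^ n) = 0 := by
      intro t
      have h := (Nat.modEq_zero_iff_dvd).mpr (hdvdK.mul_right (g ^ (2 * t)))
      simpa [Nat.ModEq] using h
    simp only [hzero, pow_zero]
    rw [Finset.sum_const, Finset.card_range, nsmul_eq_mul, mul_one]
  · intro hiA
    subst hiA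
    rw [hLHS]
    have h2P : 2 * ((p - 1) / 2) = p - 1 := Nat.mul_div_cancel' h2dvd
    have hg1 : g ^ (p - 1) ≡ 1 [MOD p] := by
      have h1 : ((g : ℕ) : ZMod p) ^ (p - 1) = 1 := hordp ▸ pow_orderOf_eq_one _
      have h2 : ((g ^ (p - 1) : ℕ) : ZMod p) = ((1 : ℕ) : ZMod p) := by push_cast [h1]; rfl
      exact (ZMod.natCast_eq_natCast_iff _ _ _).mp h2
    have hdvdkcp : p ^ m * q ^ n ∣ p ^ A * q ^ B * l * (p ^ (m - (A + 1)) * q ^ n) * p := by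
      refine ⟨q ^ B * l, ?_⟩
      rw [show p ^ A * q ^ B * l * (p ^ (m - (A + 1)) * q ^ n) * p
          = (p ^ A * p ^ (m - (A + 1)) * p ^ 1) * (q ^ n * (q ^ B * l)) by ring,
        ← pow_add, ← pow_add, show A + (m - (A + 1)) + 1 = m by omega]
      ring
    have hper : ∀ t, β ^ ((p ^ A * q ^ B * l * (p ^ (m - (A + 1)) * q ^ n)
          * g ^ (2 * (t + (p - 1) / 2))) % (p ^ m * q ^ n))
        = β ^ ((p ^ A * q ^ B * l * (p ^ (m - (A + 1)) * q ^ n) * g ^ (2 * t))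
            % (p ^ m * q ^ n)) := by
      intro t
      rw [← pow_mod_eq' hNone, ← pow_mod_eq' hNone]
      apply pow_eq_pow_of_modEq_one hNone
      have hexp : g ^ (2 * (t + (p - 1) / 2)) = g ^ (2 * t) * g ^ (p - 1) := by
        rw [← pow_add]; congr 1; omega
      have h4 := (hg1.mul_left' (p ^ A * q ^ B * l * (p ^ (m - (A + 1)) * q ^ n)
        * g ^ (2 * t))).of_dvd (dvd_trans hdvdkcp ⟨g ^ (2 * t), by ring⟩)
      calc p ^ A * q ^ B * l * (p ^ (m - (A + 1)) * q ^ n) * g ^ (2 * (t + (p - 1) / 2))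
          = p ^ A * q ^ B * l * (p ^ (m - (A + 1)) * q ^ n) * g ^ (2 * t) * g ^ (p - 1) := by
            rw [hexp]; ring
        _ ≡ p ^ A * q ^ B * l * (p ^ (m - (A + 1)) * q ^ n) * g ^ (2 * t) * 1
            [MOD p ^ m * q ^ n] := h4
        _ = p ^ A * q ^ B * l * (p ^ (m - (A + 1)) * q ^ n) * g ^ (2 * t) := by ring
    have hcol := sum_range_mul_of_periodic
      (fun t => β ^ ((p ^ A * q ^ B * l * (p ^ (m - (A + 1)) * q ^ n) * g ^ (2 * t))
        % (p ^ m * q ^ n))) (p ^ A) ((p - 1) / 2) hper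
    have hsplit : p ^ (A + 1 - 1) * (p - 1) / 2 = p ^ A * ((p - 1) / 2) := by
      rw [show A + 1 - 1 = A by omega, Nat.mul_div_assoc _ h2dvd]
    rw [hsplit, hcol, odd_smul_eq h2K (hpodd.pow)]
    have hordp2 : orderOf ((g : ℕ) : ZMod p) = 2 * ((p - 1) / 2) := by
      rw [hordp, h2P]
    rw [sum_DP p g (β ^ (p ^ (m - 1) * q ^ (n + B))) l (inj_pow_mod hordp2)]
    refine Finset.sum_congr rfl fun t _ => ?_
    beta_reduce
    rw [← pow_mul, ← pow_mod_eq' hNone]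
    apply pow_eq_pow_of_modEq_one hNone
    have hEK : p ^ (m - 1) * q ^ (n + B) * l = p ^ A * q ^ B * l * (p ^ (m - (A + 1)) * q ^ n) := by
      rw [show p ^ A * q ^ B * l * (p ^ (m - (A + 1)) * q ^ n)
          = (p ^ A * p ^ (m - (A + 1))) * (q ^ B * q ^ n) * l by ring, ← pow_add, ← pow_add,
        show A + (m - (A + 1)) = m - 1 by omega, show B + n = n + B by omega]
    have hdvdElp : p ^ m * q ^ n ∣ p ^ (m - 1) * q ^ (n + B) * l * p := by
      refine ⟨q ^ B * l, ?_⟩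
      rw [show p ^ (m - 1) * q ^ (n + B) * l * p = (p ^ (m - 1) * p ^ 1) * q ^ (n + B) * l by ring,
        ← pow_add, show m - 1 + 1 = m by omega, show n + B = n + B from rfl]
      rw [show q ^ (n + B) = q ^ n * q ^ B by rw [pow_add]]
      ring
    have hstep : p ^ (m - 1) * q ^ (n + B) * (l * (g ^ (2 * t) % p))
        ≡ p ^ (m - 1) * q ^ (n + B) * (l * g ^ (2 * t)) [MOD p ^ m * q ^ n] := by
      have h5 := ((Nat.mod_modEq (g ^ (2 * t)) p).mul_left'
        (p ^ (m - 1) * q ^ (n + B) * l)).of_dvd hdvdElp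
      calc p ^ (m - 1) * q ^ (n + B) * (l * (g ^ (2 * t) % p))
          = p ^ (m - 1) * q ^ (n + B) * l * (g ^ (2 * t) % p) := by ring
        _ ≡ p ^ (m - 1) * q ^ (n + B) * l * g ^ (2 * t) [MOD p ^ m * q ^ n] := h5
        _ = p ^ (m - 1) * q ^ (n + B) * (l * g ^ (2 * t)) := by ring
    calc p ^ A * q ^ B * l * (p ^ (m - (A + 1)) * q ^ n) * g ^ (2 * t)
        = p ^ (m - 1) * q ^ (n + B) * (l * g ^ (2 * t)) := by rw [← hEK]; ring
      _ ≡ p ^ (m - 1) * q ^ (n + B) * (l * (g ^ (2 * t) % p)) [MOD p ^ m * q ^ n] := hstep.symm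
  · intro hiA
    obtain ⟨r, rfl⟩ : ∃ r, i = A + r := ⟨i - A, by omega⟩
    have hr2 : 2 ≤ r := by omega
    have hrm : A + r ≤ m := him
    rw [hLHS]
    have hordpr : orderOf ((g : ℕ) : ZMod (p ^ r)) = p ^ (r - 1) * (p - 1) := by
      have h := hgp r (by omega) (by omega)
      rw [Nat.totient_prime_pow hp (by omega)] at h
      exact h
    have hordpr1 : orderOf ((g : ℕ) : ZMod (p ^ (r - 1))) = p ^ (r - 2) * (p - 1) := by
      have h := hgp (r - 1) (by omega) (by omega)
      rw [Nat.totient_prime_pow hp (by omega), show r - 1 - 1 = r - 2 by omega] at h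
      exact h
    have h2Pr : 2 * (p ^ (r - 1) * (p - 1) / 2) = p ^ (r - 1) * (p - 1) :=
      Nat.mul_div_cancel' (h2dvd.mul_left _)
    have h2M2 : 2 * (p ^ (r - 2) * (p - 1) / 2) = p ^ (r - 2) * (p - 1) :=
      Nat.mul_div_cancel' (h2dvd.mul_left _)
    have hdvdkcpr : p ^ m * q ^ n ∣
        p ^ A * q ^ B * l * (p ^ (m - (A + r)) * q ^ n) * p ^ r := by
      refine ⟨q ^ B * l, ?_⟩
      rw [show p ^ A * q ^ B * l * (p ^ (m - (A + r)) * q ^ n) * p ^ r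
          = p ^ A * p ^ (m - (A + r)) * p ^ r * (q ^ n * (q ^ B * l)) by ring,
        ← pow_add, ← pow_add, show A + (m - (A + r)) + r = m by omega]
      ring
    have hgr1 : g ^ (p ^ (r - 1) * (p - 1)) ≡ 1 [MOD p ^ r] := by
      have h1 : ((g : ℕ) : ZMod (p ^ r)) ^ (p ^ (r - 1) * (p - 1)) = 1 :=
        hordpr ▸ pow_orderOf_eq_one _
      have h2 : ((g ^ (p ^ (r - 1) * (p - 1)) : ℕ) : ZMod (p ^ r)) = ((1 : ℕ) : ZMod (p ^ r)) := by
        push_cast [h1]; rfl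
      exact (ZMod.natCast_eq_natCast_iff _ _ _).mp h2
    have hgr1' : g ^ (p ^ (r - 2) * (p - 1)) ≡ 1 [MOD p ^ (r - 1)] := by
      have h1 : ((g : ℕ) : ZMod (p ^ (r - 1))) ^ (p ^ (r - 2) * (p - 1)) = 1 :=
        hordpr1 ▸ pow_orderOf_eq_one _
      have h2 : ((g ^ (p ^ (r - 2) * (p - 1)) : ℕ) : ZMod (p ^ (r - 1)))
          = ((1 : ℕ) : ZMod (p ^ (r - 1))) := by
        push_cast [h1]; rfl
      exact (ZMod.natCast_eq_natCast_iff _ _ _).mp h2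
    have hper : ∀ t, β ^ ((p ^ A * q ^ B * l * (p ^ (m - (A + r)) * q ^ n)
          * g ^ (2 * (t + p ^ (r - 1) * (p - 1) / 2))) % (p ^ m * q ^ n))
        = β ^ ((p ^ A * q ^ B * l * (p ^ (m - (A + r)) * q ^ n) * g ^ (2 * t))
            % (p ^ m * q ^ n)) := by
      intro t
      rw [← pow_mod_eq' hNone, ← pow_mod_eq' hNone]
      apply pow_eq_pow_of_modEq_one hNone
      have hexp : g ^ (2 * (t + p ^ (r - 1) * (p - 1) / 2))
          = g ^ (2 * t) * g ^ (p ^ (r - 1) * (p - 1)) := by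
        rw [← pow_add]; congr 1; omega
      have h4 := (hgr1.mul_left' (p ^ A * q ^ B * l * (p ^ (m - (A + r)) * q ^ n)
        * g ^ (2 * t))).of_dvd (dvd_trans hdvdkcpr ⟨g ^ (2 * t), by ring⟩)
      calc p ^ A * q ^ B * l * (p ^ (m - (A + r)) * q ^ n)
            * g ^ (2 * (t + p ^ (r - 1) * (p - 1) / 2))
          = p ^ A * q ^ B * l * (p ^ (m - (A + r)) * q ^ n) * g ^ (2 * t)
            * g ^ (p ^ (r - 1) * (p - 1)) := by rw [hexp]; ring
        _ ≡ p ^ A * q ^ B * l * (p ^ (m - (A + r)) * q ^ n) * g ^ (2 * t) * 1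
            [MOD p ^ m * q ^ n] := h4
        _ = p ^ A * q ^ B * l * (p ^ (m - (A + r)) * q ^ n) * g ^ (2 * t) := by ring
    have hcol := sum_range_mul_of_periodic
      (fun t => β ^ ((p ^ A * q ^ B * l * (p ^ (m - (A + r)) * q ^ n) * g ^ (2 * t))
        % (p ^ m * q ^ n))) (p ^ A) (p ^ (r - 1) * (p - 1) / 2) hper
    have hsplit : p ^ (A + r - 1) * (p - 1) / 2 = p ^ A * (p ^ (r - 1) * (p - 1) / 2) := by
      rw [Nat.mul_div_assoc _ h2dvd, Nat.mul_div_assoc _ h2dvd,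
        show p ^ (A + r - 1) = p ^ A * p ^ (r - 1) by rw [← pow_add]; congr 1; omega]
      ring
    rw [hsplit, hcol, odd_smul_eq h2K (hpodd.pow)]
    have hsplit2 : p ^ (r - 1) * (p - 1) / 2 = p * (p ^ (r - 2) * (p - 1) / 2) := by
      rw [Nat.mul_div_assoc _ h2dvd, Nat.mul_div_assoc _ h2dvd,
        show p ^ (r - 1) = p * p ^ (r - 2) by
          rw [show p * p ^ (r - 2) = p ^ 1 * p ^ (r - 2) by rw [pow_one], ← pow_add]
          congr 1; omega]
      ring
    rw [hsplit2, sum_range_mul'', Finset.sum_comm]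
    apply Finset.sum_eq_zero
    intro a _
    -- W and c0
    set W := g ^ (2 * (p ^ (r - 2) * (p - 1) / 2)) % p ^ r with hWdef
    have hprpos : 0 < p ^ r := by positivity
    have hWm : W ≡ g ^ (2 * (p ^ (r - 2) * (p - 1) / 2)) [MOD p ^ r] := Nat.mod_modEq _ _
    have hx : g ^ (2 * (p ^ (r - 2) * (p - 1) / 2)) ≡ 1 [MOD p ^ (r - 1)] := by
      rw [h2M2]; exact hgr1'
    have hW1 : W ≡ 1 [MOD p ^ (r - 1)] :=
      (hWm.of_dvd (pow_dvd_pow p (by omega))).trans hx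
    have hWlt : W < p ^ r := Nat.mod_lt _ hprpos
    have hple : p ≤ p ^ (r - 1) := Nat.le_self_pow (by omega) p
    have hWge1 : 1 ≤ W := by
      rcases Nat.eq_zero_or_pos W with h0 | h1
      · exfalso
        rw [h0] at hW1
        have := Nat.le_of_dvd one_pos ((Nat.modEq_iff_dvd' (by omega)).mp hW1)
        omega
      · exact h1
    have hWne1 : W ≠ 1 := by
      intro h1
      have hg2M : g ^ (2 * (p ^ (r - 2) * (p - 1) / 2)) ≡ 1 [MOD p ^ r] := by
        calc g ^ (2 * (p ^ (r - 2) * (p - 1) / 2)) ≡ W [MOD p ^ r] := hWm.symm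
          _ = 1 := h1
      have hz : ((g : ℕ) : ZMod (p ^ r)) ^ (2 * (p ^ (r - 2) * (p - 1) / 2)) = 1 := by
        have h2 := (ZMod.natCast_eq_natCast_iff _ _ _).mpr hg2M
        push_cast at h2
        exact h2
      have hdvd := orderOf_dvd_of_pow_eq_one hz
      rw [hordpr, h2M2] at hdvd
      have hle := Nat.le_of_dvd (Nat.mul_pos (by positivity) (by omega)) hdvd
      have hlt : p ^ (r - 2) < p ^ (r - 1) := Nat.pow_lt_pow_right hp1 (by omega)
      have := Nat.mul_lt_mul_of_lt_of_le hlt (le_refl (p - 1)) (by omega)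
      omega
    have hdvdW : p ^ (r - 1) ∣ W - 1 := (Nat.modEq_iff_dvd' hWge1).mp hW1.symm
    have hc0 : W = 1 + (W - 1) / p ^ (r - 1) * p ^ (r - 1) := by
      have := Nat.div_mul_cancel hdvdW
      omega
    set c0 := (W - 1) / p ^ (r - 1) with hc0def
    have hpc0 : ¬ p ∣ c0 := by
      intro hdvd
      obtain ⟨e, he⟩ := hdvd
      have hdvdr : p ^ r ∣ W - 1 := by
        refine ⟨e, ?_⟩
        have h5 : c0 * p ^ (r - 1) = W - 1 := Nat.div_mul_cancel hdvdW
        rw [← h5, he, show p * e * p ^ (r - 1) = p ^ (r - 1) * p * e by ring,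
          ← pow_succ, show r - 1 + 1 = r by omega]
      have := Nat.eq_zero_of_dvd_of_lt hdvdr (by omega)
      omega
    have hWb : ∀ b : ℕ, W ^ b ≡ 1 + b * c0 * p ^ (r - 1) [MOD p ^ r] := by
      intro b
      induction b with
      | zero => simpa using Nat.ModEq.refl 1
      | succ b ih =>
        have h1 : p ^ r ∣ p ^ (r - 1) * p ^ (r - 1) := by
          rw [← pow_add]; exact pow_dvd_pow p (by omega)
        have e1 : (1 + b * c0 * p ^ (r - 1)) * (1 + c0 * p ^ (r - 1))
            = 1 + (b + 1) * c0 * p ^ (r - 1) + b * c0 * c0 * (p ^ (r - 1) * p ^ (r - 1)) := by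
          ring
        have hd : p ^ r ∣ (1 + b * c0 * p ^ (r - 1)) * (1 + c0 * p ^ (r - 1))
            - (1 + (b + 1) * c0 * p ^ (r - 1)) := by
          rw [e1, Nat.add_sub_cancel_left]
          exact h1.mul_left _
        have hle : 1 + (b + 1) * c0 * p ^ (r - 1)
            ≤ (1 + b * c0 * p ^ (r - 1)) * (1 + c0 * p ^ (r - 1)) := by
          rw [e1]; omega
        have hstep : (1 + b * c0 * p ^ (r - 1)) * W ≡ 1 + (b + 1) * c0 * p ^ (r - 1)
            [MOD p ^ r] := by
          conv_lhs => rw [hc0]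
          exact ((Nat.modEq_iff_dvd' hle).mpr hd).symm
        calc W ^ (b + 1) = W ^ b * W := pow_succ W b
          _ ≡ (1 + b * c0 * p ^ (r - 1)) * W [MOD p ^ r] := ih.mul_right W
          _ ≡ 1 + (b + 1) * c0 * p ^ (r - 1) [MOD p ^ r] := hstep
    -- rewrite each term
    have hterm2 : ∀ b : ℕ,
        β ^ ((p ^ A * q ^ B * l * (p ^ (m - (A + r)) * q ^ n)
            * g ^ (2 * (b * (p ^ (r - 2) * (p - 1) / 2) + a))) % (p ^ m * q ^ n))
          = β ^ (p ^ A * q ^ B * l * (p ^ (m - (A + r)) * q ^ n) * g ^ (2 * a))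
            * (β ^ (p ^ A * q ^ B * l * (p ^ (m - (A + r)) * q ^ n) * g ^ (2 * a) * c0
                * p ^ (r - 1))) ^ b := by
      intro b
      rw [← pow_mod_eq' hNone]
      have hexp : g ^ (2 * (b * (p ^ (r - 2) * (p - 1) / 2) + a))
          = g ^ (2 * a) * (g ^ (2 * (p ^ (r - 2) * (p - 1) / 2))) ^ b := by
        rw [← pow_mul, ← pow_add]; congr 1; ring
      have h6 : (g ^ (2 * (p ^ (r - 2) * (p - 1) / 2))) ^ b ≡ W ^ b [MOD p ^ r] :=
        hWm.symm.pow b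
      have h7 : (g ^ (2 * (p ^ (r - 2) * (p - 1) / 2))) ^ b
          ≡ 1 + b * c0 * p ^ (r - 1) [MOD p ^ r] := h6.trans (hWb b)
      have h8 := (h7.mul_left' (p ^ A * q ^ B * l * (p ^ (m - (A + r)) * q ^ n)
        * g ^ (2 * a))).of_dvd (dvd_trans hdvdkcpr ⟨g ^ (2 * a), by ring⟩)
      have hmod : p ^ A * q ^ B * l * (p ^ (m - (A + r)) * q ^ n)
            * g ^ (2 * (b * (p ^ (r - 2) * (p - 1) / 2) + a))
          ≡ p ^ A * q ^ B * l * (p ^ (m - (A + r)) * q ^ n) * g ^ (2 * a)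
            + p ^ A * q ^ B * l * (p ^ (m - (A + r)) * q ^ n) * g ^ (2 * a) * c0
              * p ^ (r - 1) * b [MOD p ^ m * q ^ n] := by
        calc p ^ A * q ^ B * l * (p ^ (m - (A + r)) * q ^ n)
              * g ^ (2 * (b * (p ^ (r - 2) * (p - 1) / 2) + a))
            = p ^ A * q ^ B * l * (p ^ (m - (A + r)) * q ^ n) * g ^ (2 * a)
              * (g ^ (2 * (p ^ (r - 2) * (p - 1) / 2))) ^ b := by rw [hexp]; ring
          _ ≡ p ^ A * q ^ B * l * (p ^ (m - (A + r)) * q ^ n) * g ^ (2 * a)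
              * (1 + b * c0 * p ^ (r - 1)) [MOD p ^ m * q ^ n] := h8
          _ = p ^ A * q ^ B * l * (p ^ (m - (A + r)) * q ^ n) * g ^ (2 * a)
              + p ^ A * q ^ B * l * (p ^ (m - (A + r)) * q ^ n) * g ^ (2 * a) * c0
                * p ^ (r - 1) * b := by ring
      rw [pow_eq_pow_of_modEq_one hNone hmod, pow_add,
        pow_mul β (p ^ A * q ^ B * l * (p ^ (m - (A + r)) * q ^ n) * g ^ (2 * a) * c0
          * p ^ (r - 1)) b]
    -- geometric sum vanishes
    have hρp : (β ^ (p ^ A * q ^ B * l * (p ^ (m - (A + r)) * q ^ n) * g ^ (2 * a) * c0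
        * p ^ (r - 1))) ^ p = 1 := by
      rw [← pow_mul]
      refine (hβ.pow_eq_one_iff_dvd _).mpr ?_
      refine dvd_trans hdvdkcpr ⟨g ^ (2 * a) * c0, ?_⟩
      rw [show p ^ A * q ^ B * l * (p ^ (m - (A + r)) * q ^ n) * g ^ (2 * a) * c0
          * p ^ (r - 1) * p
        = p ^ A * q ^ B * l * (p ^ (m - (A + r)) * q ^ n) * (p ^ (r - 1) * p)
          * (g ^ (2 * a) * c0) by ring, ← pow_succ, show r - 1 + 1 = r by omega]
    have hρne : β ^ (p ^ A * q ^ B * l * (p ^ (m - (A + r)) * q ^ n) * g ^ (2 * a) * c0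
        * p ^ (r - 1)) ≠ 1 := by
      intro h1
      have hdvd := (hβ.pow_eq_one_iff_dvd _).mp h1
      have hEeq : p ^ A * q ^ B * l * (p ^ (m - (A + r)) * q ^ n) * g ^ (2 * a) * c0
          * p ^ (r - 1) = p ^ (m - 1) * (q ^ (n + B) * (l * (g ^ (2 * a) * c0))) := by
        rw [show p ^ A * q ^ B * l * (p ^ (m - (A + r)) * q ^ n) * g ^ (2 * a) * c0
            * p ^ (r - 1)
          = p ^ A * p ^ (m - (A + r)) * p ^ (r - 1)
            * (q ^ B * q ^ n * (l * (g ^ (2 * a) * c0))) by ring,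
          ← pow_add, ← pow_add, ← pow_add, show A + (m - (A + r)) + (r - 1) = m - 1 by omega,
          show B + n = n + B by omega]
      rw [hEeq] at hdvd
      have hpm' : p ^ m ∣ p ^ (m - 1) * (q ^ (n + B) * (l * (g ^ (2 * a) * c0))) :=
        dvd_trans (dvd_mul_right (p ^ m) (q ^ n)) hdvd
      have hpX : p ∣ q ^ (n + B) * (l * (g ^ (2 * a) * c0)) := by
        have h9 : p ^ (m - 1) * p ∣ p ^ (m - 1) * (q ^ (n + B) * (l * (g ^ (2 * a) * c0))) := by
          rw [← pow_succ, show m - 1 + 1 = m by omega]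
          exact hpm'
        exact (mul_dvd_mul_iff_left (pow_ne_zero (m - 1) (by omega : p ≠ 0))).mp h9
      rcases (Nat.Prime.dvd_mul hp).mp hpX with h | h
      · exact hpq ((Nat.prime_dvd_prime_iff_eq hp hq).mp (hp.dvd_of_dvd_pow h))
      rcases (Nat.Prime.dvd_mul hp).mp h with h' | h'
      · exact hpl h'
      rcases (Nat.Prime.dvd_mul hp).mp h' with h'' | h''
      · exact hpg (hp.dvd_of_dvd_pow h'')
      · exact hpc0 h''
    have hgeo : ∑ b ∈ Finset.range p, (β ^ (p ^ A * q ^ B * l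
        * (p ^ (m - (A + r)) * q ^ n) * g ^ (2 * a) * c0 * p ^ (r - 1))) ^ b = 0 := by
      rw [geom_sum_eq hρne p, hρp, sub_self, zero_div]
    calc ∑ b ∈ Finset.range p,
          β ^ ((p ^ A * q ^ B * l * (p ^ (m - (A + r)) * q ^ n)
            * g ^ (2 * (b * (p ^ (r - 2) * (p - 1) / 2) + a))) % (p ^ m * q ^ n))
        = ∑ b ∈ Finset.range p,
            β ^ (p ^ A * q ^ B * l * (p ^ (m - (A + r)) * q ^ n) * g ^ (2 * a))
              * (β ^ (p ^ A * q ^ B * l * (p ^ (m - (A + r)) * q ^ n) * g ^ (2 * a) * c0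
                  * p ^ (r - 1))) ^ b := Finset.sum_congr rfl fun b _ => hterm2 b
      _ = β ^ (p ^ A * q ^ B * l * (p ^ (m - (A + r)) * q ^ n) * g ^ (2 * a))
            * ∑ b ∈ Finset.range p, (β ^ (p ^ A * q ^ B * l
              * (p ^ (m - (A + r)) * q ^ n) * g ^ (2 * a) * c0 * p ^ (r - 1))) ^ b := by
          rw [Finset.mul_sum]
      _ = 0 := by rw [hgeo, mul_zero]


end
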